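/- Let M ≥ 2, N ≥ M, let X_1, …, X_M be finite nonempty types, C a finite nonempty label type, and let P be a pmf on X_1 × ⋯ × X_M. Fix classifiers h = (h^1, …, h^M) with h^m : X_m → Δ_C and a prior p ∈ Δ_C with p_c > 0 for all c, and suppose S_{h,p}(x) > 0 for all x with P(x) > 0. For x_1, …, x_N drawn i.i.d. from P, define the empirical total correlation gain TCg^{(N)} := 1 + (1/N)·∑_{i=1}^N log S_{h,p}(x_i) − (1/(N·(N−1)⋯(N−M+1)))·∑_{(i_1, …, i_M) pairwise distinct} ∑_{c ∈ C} (∏_{m=1}^M h^m((x_{i_m})_m)_c)/(p_c)^{M−1}, where (x_i)_m denotes the m-th coordinate of x_i. Then the expectation of TCg^{(N)} over the i.i.d. samples equals the expected total correlation gain: E[TCg^{(N)}] = eTCg(h, p) := 1 + ∑_x P(x)·log S_{h,p}(x) − ∑_x (∏_{m=1}^M P_m(x_m))·S_{h,p}(x). -/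

import Mathlib

/-- The `m`-th marginal of a pmf `P` on `X_1 × ⋯ × X_M`:
`P_m(x_m) := ∑_{x' : x'_m = x_m} P(x')`. -/
noncomputable def marginal {M : ℕ} {X : Fin M → Type*} [∀ m, Fintype (X m)]
    [∀ m, DecidableEq (X m)] (P : (∀ m, X m) → ℝ) (m : Fin M) (xm : X m) : ℝ :=
  ∑ x' : ∀ m', X m', if x' m = xm then P x' else 0

/-- The aggregated score `S_{h,p}(x) := ∑_c (∏_m h^m(x_m)_c) / (p_c)^{M−1}`. -/
noncomputable def score {M : ℕ} {X : Fin M → Type*} {C : Type*} [Fintype C]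
    (h : ∀ m, X m → C → ℝ) (p : C → ℝ) (x : ∀ m, X m) : ℝ :=
  ∑ c, (∏ m, h m (x m) c) / (p c) ^ (M - 1)

/-- The empirical total correlation gain of the samples `xs 0, …, xs (N-1)`:
`TCg^{(N)} := 1 + (1/N)·∑_i log S_{h,p}(x_i)
  − (1/(N·(N−1)⋯(N−M+1)))·∑_{(i_1,…,i_M) pairwise distinct} ∑_c (∏_m h^m((x_{i_m})_m)_c)/(p_c)^{M−1}`. -/
noncomputable def empTCg {M N : ℕ} {X : Fin M → Type*} {C : Type*} [∀ m, Fintype (X m)]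
    [Fintype C] (h : ∀ m, X m → C → ℝ) (p : C → ℝ) (xs : Fin N → ∀ m, X m) : ℝ :=
  1 + (1 / (N : ℝ)) * (∑ i : Fin N, Real.log (score h p (xs i))) -
    (1 / (N.descFactorial M : ℝ)) *
      ∑ ι ∈ Finset.univ.filter (fun ι : Fin M → Fin N => Function.Injective ι),
        ∑ c, (∏ m, h m ((xs (ι m)) m) c) / (p c) ^ (M - 1)

/-- Independence/product lemma: sum over functions of a product of per-coordinate
functions equals the product of sums. -/
lemma sum_prod_eval {ι : Type*} [Fintype ι] [DecidableEq ι] {Y : ι → Type*}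
    [∀ i, Fintype (Y i)] (F : ∀ i, Y i → ℝ) :
    ∑ x : ∀ i, Y i, ∏ i, F i (x i) = ∏ i, ∑ y, F i y := by
  rw [Finset.prod_univ_sum]
  simp [Fintype.piFinset_univ]

lemma card_filter_injective (M N : ℕ) :
    (Finset.univ.filter (fun ι : Fin M → Fin N => Function.Injective ι)).card
      = N.descFactorial M := by
  classical
  rw [← Fintype.card_subtype,
    Fintype.card_congr (Equiv.subtypeInjectiveEquivEmbedding _ _),
    Fintype.card_embedding_eq]
  simp


set_option maxHeartbeats 1000000 in
/-- for `x_1, …, x_N` drawn i.i.d. from `P` (`2 ≤ M ≤ N`), provided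
`S_{h,p}(x) > 0` whenever `P(x) > 0`, the expectation of the empirical total correlation gain
over the `N`-fold product measure equals the expected total correlation gain
`eTCg(h, p) = 1 + ∑_x P(x)·log S_{h,p}(x) − ∑_x (∏_m P_m(x_m))·S_{h,p}(x)`. -/
theorem expectation_empTCg_eq_eTCg {M N : ℕ} (hM : 2 ≤ M) (hNM : M ≤ N)
    (X : Fin M → Type*) [∀ m, Fintype (X m)] [∀ m, Nonempty (X m)] [∀ m, DecidableEq (X m)]
    (C : Type*) [Fintype C] [Nonempty C]
    (P : (∀ m, X m) → ℝ) (hP0 : ∀ x, 0 ≤ P x) (hP1 : ∑ x, P x = 1)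
    (h : ∀ m, X m → C → ℝ)
    (hh : ∀ m (xm : X m), (∀ c, 0 ≤ h m xm c) ∧ ∑ c, h m xm c = 1)
    (p : C → ℝ) (hp0 : ∀ c, 0 < p c) (hp1 : ∑ c, p c = 1)
    (hS : ∀ x : ∀ m, X m, 0 < P x → 0 < score h p x) :
    ∑ xs : Fin N → ∀ m, X m, (∏ i, P (xs i)) * empTCg h p xs =
      1 + (∑ x : ∀ m, X m, P x * Real.log (score h p x)) -
        ∑ x : ∀ m, X m, (∏ m, marginal P m (x m)) * score h p x := by
  classical
  have hN0 : (N : ℝ) ≠ 0 := Nat.cast_ne_zero.mpr (by omega)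
  have hD0 : ((N.descFactorial M : ℕ) : ℝ) ≠ 0 :=
    Nat.cast_ne_zero.mpr (fun hz => absurd (Nat.descFactorial_eq_zero_iff_lt.mp hz) (by omega))
  -- expectation of a function of one sample
  have key1 : ∀ (F : (∀ m, X m) → ℝ) (i : Fin N),
      ∑ xs : Fin N → ∀ m, X m, (∏ j, P (xs j)) * F (xs i) = ∑ x, P x * F x := by
    intro F i
    calc ∑ xs : Fin N → ∀ m, X m, (∏ j, P (xs j)) * F (xs i)
        = ∑ xs : Fin N → ∀ m, X m, ∏ j, (P (xs j) * (if j = i then F (xs j) else 1)) := by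
          refine Finset.sum_congr rfl fun xs _ => ?_
          rw [Finset.prod_mul_distrib]
          congr 1
          simp
      _ = ∏ j, ∑ y : ∀ m, X m, P y * (if j = i then F y else 1) :=
          sum_prod_eval (Y := fun _ : Fin N => ∀ m, X m) (fun j y => P y * (if j = i then F y else 1))
      _ = ∑ x, P x * F x := by
          rw [Finset.prod_eq_single i (fun j _ hj => by simp [hj, hP1]) (by simp)]
          simp
  -- expectation of 1
  have e1 : ∑ xs : Fin N → ∀ m, X m, (∏ i, P (xs i)) = 1 := by
    rw [sum_prod_eval (Y := fun _ : Fin N => ∀ m, X m) (fun _ y => P y)]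
    simp [hP1]
  -- expectation for an injective tuple of samples
  have key2 : ∀ ι : Fin M → Fin N, Function.Injective ι → ∀ c : C,
      ∑ xs : Fin N → ∀ m, X m, (∏ j, P (xs j)) * ∏ m, h m ((xs (ι m)) m) c
        = ∏ m, ∑ y : ∀ m', X m', P y * h m (y m) c := by
    intro ι hι c
    have fib : ∀ xs : Fin N → ∀ m, X m,
        ∏ j : Fin N, ∏ m ∈ Finset.univ.filter (fun m => ι m = j), h m ((xs j) m) c
          = ∏ m, h m ((xs (ι m)) m) c := by
      intro xs
      calc ∏ j : Fin N, ∏ m ∈ Finset.univ.filter (fun m => ι m = j), h m ((xs j) m) c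
          = ∏ j : Fin N, ∏ m ∈ Finset.univ.filter (fun m => ι m = j),
              h m ((xs (ι m)) m) c :=
            Finset.prod_congr rfl fun j _ => Finset.prod_congr rfl fun m hm => by
              rw [(Finset.mem_filter.mp hm).2]
        _ = ∏ m, h m ((xs (ι m)) m) c :=
            Finset.prod_fiberwise_of_maps_to (fun m _ => Finset.mem_univ (ι m)) _
    calc ∑ xs : Fin N → ∀ m, X m, (∏ j, P (xs j)) * ∏ m, h m ((xs (ι m)) m) c
        = ∑ xs : Fin N → ∀ m, X m, ∏ j,
            (P (xs j) * ∏ m ∈ Finset.univ.filter (fun m => ι m = j), h m ((xs j) m) c) := by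
          refine Finset.sum_congr rfl fun xs _ => ?_
          rw [Finset.prod_mul_distrib, fib xs]
      _ = ∏ j : Fin N, ∑ y : ∀ m', X m',
            P y * ∏ m ∈ Finset.univ.filter (fun m => ι m = j), h m (y m) c :=
          sum_prod_eval (Y := fun _ : Fin N => ∀ m, X m)
            (fun j y => P y * ∏ m ∈ Finset.univ.filter (fun m => ι m = j), h m (y m) c)
      _ = ∏ m, ∑ y : ∀ m', X m', P y * h m (y m) c := by
          have h1 : ∀ j ∉ Finset.image ι Finset.univ,
              (∑ y : ∀ m', X m',
                P y * ∏ m ∈ Finset.univ.filter (fun m => ι m = j), h m (y m) c) = 1 := by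
            intro j hj
            have hempty : Finset.univ.filter (fun m => ι m = j) = ∅ := by
              ext m
              simp only [Finset.mem_filter, Finset.mem_univ, true_and, Finset.notMem_empty,
                iff_false]
              intro hmj
              exact hj (Finset.mem_image.mpr ⟨m, Finset.mem_univ m, hmj⟩)
            simp [hempty, hP1]
          have h2 : ∀ m : Fin M,
              Finset.univ.filter (fun m' => ι m' = ι m) = {m} := by
            intro m
            ext m'
            simp [hι.eq_iff]
          calc ∏ j : Fin N, ∑ y : ∀ m', X m',
                P y * ∏ m ∈ Finset.univ.filter (fun m => ι m = j), h m (y m) c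
              = ∏ j ∈ Finset.image ι Finset.univ, ∑ y : ∀ m', X m',
                P y * ∏ m ∈ Finset.univ.filter (fun m => ι m = j), h m (y m) c :=
                (Finset.prod_subset (Finset.subset_univ _) (fun j _ hj => h1 j hj)).symm
            _ = ∏ m, ∑ y : ∀ m', X m',
                P y * ∏ m' ∈ Finset.univ.filter (fun m' => ι m' = ι m), h m' (y m') c :=
                Finset.prod_image (fun a _ b _ hab => hι hab)
            _ = ∏ m, ∑ y : ∀ m', X m', P y * h m (y m) c := by
                refine Finset.prod_congr rfl fun m _ => ?_
                simp [h2 m]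
  -- the third term rewritten via marginals
  have key3 : ∑ x : ∀ m, X m, (∏ m, marginal P m (x m)) * score h p x
      = ∑ c, (∏ m, ∑ y : ∀ m', X m', P y * h m (y m) c) / p c ^ (M - 1) := by
    simp only [score, Finset.mul_sum]
    rw [Finset.sum_comm]
    refine Finset.sum_congr rfl fun c _ => ?_
    simp only [← mul_div_assoc]
    rw [← Finset.sum_div]
    congr 1
    calc ∑ x : ∀ m, X m, (∏ m, marginal P m (x m)) * ∏ m, h m (x m) c
        = ∑ x : ∀ m, X m, ∏ m, (marginal P m (x m) * h m (x m) c) := by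
          simp [Finset.prod_mul_distrib]
      _ = ∏ m, ∑ xm : X m, marginal P m xm * h m xm c :=
          sum_prod_eval (Y := X) (fun m xm => marginal P m xm * h m xm c)
      _ = ∏ m, ∑ y : ∀ m', X m', P y * h m (y m) c := by
          refine Finset.prod_congr rfl fun m _ => ?_
          simp only [marginal, Finset.sum_mul]
          rw [Finset.sum_comm]
          refine Finset.sum_congr rfl fun y _ => ?_
          simp [ite_mul]
  -- expectation of the log term
  have e2 : ∑ xs : Fin N → ∀ m, X m,
      (∏ i, P (xs i)) * ((1 / (N : ℝ)) * ∑ i : Fin N, Real.log (score h p (xs i)))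
        = ∑ x : ∀ m, X m, P x * Real.log (score h p x) := by
    calc ∑ xs : Fin N → ∀ m, X m,
        (∏ i, P (xs i)) * ((1 / (N : ℝ)) * ∑ i : Fin N, Real.log (score h p (xs i)))
        = ∑ xs : Fin N → ∀ m, X m, ∑ i : Fin N,
            (1 / (N : ℝ)) * ((∏ j, P (xs j)) * Real.log (score h p (xs i))) := by
          refine Finset.sum_congr rfl fun xs _ => ?_
          rw [Finset.mul_sum, Finset.mul_sum]
          exact Finset.sum_congr rfl fun i _ => by ring
      _ = ∑ i : Fin N, ∑ xs : Fin N → ∀ m, X m,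
            (1 / (N : ℝ)) * ((∏ j, P (xs j)) * Real.log (score h p (xs i))) :=
          Finset.sum_comm
      _ = ∑ i : Fin N, (1 / (N : ℝ)) * ∑ x : ∀ m, X m, P x * Real.log (score h p x) := by
          refine Finset.sum_congr rfl fun i _ => ?_
          rw [← Finset.mul_sum, key1 (fun x => Real.log (score h p x)) i]
      _ = ∑ x : ∀ m, X m, P x * Real.log (score h p x) := by
          rw [Finset.sum_const, Finset.card_univ, Fintype.card_fin, nsmul_eq_mul]
          field_simp
  -- expectation of the U-statistic term
  have e3 : ∑ xs : Fin N → ∀ m, X m,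
      (∏ i, P (xs i)) * ((1 / (N.descFactorial M : ℝ)) *
        ∑ ι ∈ Finset.univ.filter (fun ι : Fin M → Fin N => Function.Injective ι),
          ∑ c, (∏ m, h m ((xs (ι m)) m) c) / (p c) ^ (M - 1))
        = ∑ x : ∀ m, X m, (∏ m, marginal P m (x m)) * score h p x := by
    have step : ∀ ι ∈ Finset.univ.filter (fun ι : Fin M → Fin N => Function.Injective ι),
        ∑ xs : Fin N → ∀ m, X m,
          (∏ j, P (xs j)) * ∑ c, (∏ m, h m ((xs (ι m)) m) c) / (p c) ^ (M - 1)
          = ∑ c, (∏ m, ∑ y : ∀ m', X m', P y * h m (y m) c) / p c ^ (M - 1) := by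
      intro ι hι
      have hinj : Function.Injective ι := (Finset.mem_filter.mp hι).2
      calc ∑ xs : Fin N → ∀ m, X m,
            (∏ j, P (xs j)) * ∑ c, (∏ m, h m ((xs (ι m)) m) c) / (p c) ^ (M - 1)
          = ∑ c, (∑ xs : Fin N → ∀ m, X m,
              (∏ j, P (xs j)) * ∏ m, h m ((xs (ι m)) m) c) / (p c) ^ (M - 1) := by
            simp only [Finset.mul_sum, ← mul_div_assoc]
            rw [Finset.sum_comm]
            exact Finset.sum_congr rfl fun c _ => (Finset.sum_div _ _ _).symm
        _ = ∑ c, (∏ m, ∑ y : ∀ m', X m', P y * h m (y m) c) / p c ^ (M - 1) := by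
            refine Finset.sum_congr rfl fun c _ => ?_
            rw [key2 ι hinj c]
    calc ∑ xs : Fin N → ∀ m, X m,
        (∏ i, P (xs i)) * ((1 / (N.descFactorial M : ℝ)) *
          ∑ ι ∈ Finset.univ.filter (fun ι : Fin M → Fin N => Function.Injective ι),
            ∑ c, (∏ m, h m ((xs (ι m)) m) c) / (p c) ^ (M - 1))
        = (1 / (N.descFactorial M : ℝ)) *
            ∑ ι ∈ Finset.univ.filter (fun ι : Fin M → Fin N => Function.Injective ι),
              ∑ xs : Fin N → ∀ m, X m,
                (∏ j, P (xs j)) * ∑ c, (∏ m, h m ((xs (ι m)) m) c) / (p c) ^ (M - 1) := by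
          rw [show (∑ xs : Fin N → ∀ m, X m,
              (∏ i, P (xs i)) * ((1 / (N.descFactorial M : ℝ)) *
                ∑ ι ∈ Finset.univ.filter (fun ι : Fin M → Fin N => Function.Injective ι),
                  ∑ c, (∏ m, h m ((xs (ι m)) m) c) / (p c) ^ (M - 1)))
              = ∑ xs : Fin N → ∀ m, X m,
                  ∑ ι ∈ Finset.univ.filter (fun ι : Fin M → Fin N => Function.Injective ι),
                    (1 / (N.descFactorial M : ℝ)) * ((∏ j, P (xs j)) *
                      ∑ c, (∏ m, h m ((xs (ι m)) m) c) / (p c) ^ (M - 1)) from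
            Finset.sum_congr rfl fun xs _ => by
              rw [Finset.mul_sum, Finset.mul_sum]
              exact Finset.sum_congr rfl fun ι _ => by ring]
          rw [Finset.sum_comm, Finset.mul_sum]
          exact Finset.sum_congr rfl fun ι _ => (Finset.mul_sum _ _ _).symm
      _ = (1 / (N.descFactorial M : ℝ)) *
            ∑ ι ∈ Finset.univ.filter (fun ι : Fin M → Fin N => Function.Injective ι),
              ∑ c, (∏ m, ∑ y : ∀ m', X m', P y * h m (y m) c) / p c ^ (M - 1) := by
          rw [Finset.sum_congr rfl step]
      _ = ∑ c, (∏ m, ∑ y : ∀ m', X m', P y * h m (y m) c) / p c ^ (M - 1) := by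
          rw [Finset.sum_const, card_filter_injective, nsmul_eq_mul]
          field_simp
      _ = ∑ x : ∀ m, X m, (∏ m, marginal P m (x m)) * score h p x := key3.symm
  calc ∑ xs : Fin N → ∀ m, X m, (∏ i, P (xs i)) * empTCg h p xs
      = ∑ xs : Fin N → ∀ m, X m,
          ((∏ i, P (xs i))
            + (∏ i, P (xs i)) * ((1 / (N : ℝ)) * ∑ i : Fin N, Real.log (score h p (xs i)))
            - (∏ i, P (xs i)) * ((1 / (N.descFactorial M : ℝ)) *
                ∑ ι ∈ Finset.univ.filter (fun ι : Fin M → Fin N => Function.Injective ι),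
                  ∑ c, (∏ m, h m ((xs (ι m)) m) c) / (p c) ^ (M - 1))) := by
        refine Finset.sum_congr rfl fun xs _ => ?_
        simp only [empTCg]
        ring
    _ = 1 + (∑ x : ∀ m, X m, P x * Real.log (score h p x)) -
        ∑ x : ∀ m, X m, (∏ m, marginal P m (x m)) * score h p x := by
        rw [Finset.sum_sub_distrib, Finset.sum_add_distrib, e1, e2, e3]
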